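/- Let G be a group, let g ≥ 4, and let a_1,…,a_{g−1}, u_1 be elements of G satisfying: a_i a_j = a_j a_i for |i−j|>1; a_i a_{i+1} a_i = a_{i+1} a_i a_{i+1} for i=1,…,g−2; and u_1 a_i = a_i u_1 for i=3,…,g−1. Set M = a_1 a_2 ⋯ a_{g−1}. Then for every k with 2 ≤ k ≤ g−2, the element u_1 commutes with M^k u_1 M^{−k} if and only if u_1 commutes with M^2 u_1 M^{−2}. -/

import Mathlib

private lemma conj_comm_iff {G : Type*} [Group G] (u v P : G) (hP : P * u = u * P) :
    u * (P * v * P⁻¹) = (P * v * P⁻¹) * u ↔ u * v = v * u := by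
  have hu : P * u * P⁻¹ = u := by rw [hP, mul_inv_cancel_right]
  have h1 : (P * u * P⁻¹) * (P * v * P⁻¹) = P * (u * v) * P⁻¹ := by group
  have h2 : (P * v * P⁻¹) * (P * u * P⁻¹) = P * (v * u) * P⁻¹ := by group
  constructor
  · intro h
    have h' : P * (u * v) * P⁻¹ = P * (v * u) * P⁻¹ := by
      rw [← h1, ← h2, hu]; exact h
    exact mul_left_cancel (mul_right_cancel h')
  · intro h
    rw [← hu, h1, h2, h]

/-- the commutation of `u₁` with `Mᵏ u₁ M⁻ᵏ` reduces to the case `k = 2`. -/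
theorem stmt_8 {G : Type*} [Group G] (g : ℕ) (hg : 4 ≤ g) (a : ℕ → G) (u1 : G)
    (hA1 : ∀ i j, 1 ≤ i → j ≤ g - 1 → i + 1 < j → a i * a j = a j * a i)
    (hA2 : ∀ i, 1 ≤ i → i ≤ g - 2 → a i * a (i + 1) * a i = a (i + 1) * a i * a (i + 1))
    (hC1' : ∀ i, 3 ≤ i → i ≤ g - 1 → u1 * a i = a i * u1)
    (M : G) (hM : M = ((List.range' 1 (g - 1)).map a).prod) :
    ∀ k, 2 ≤ k → k ≤ g - 2 →
      (u1 * (M ^ k * u1 * (M ^ k)⁻¹) = (M ^ k * u1 * (M ^ k)⁻¹) * u1 ↔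
        u1 * (M ^ 2 * u1 * (M ^ 2)⁻¹) = (M ^ 2 * u1 * (M ^ 2)⁻¹) * u1) := by
  -- the shift lemma : M aᵢ M⁻¹ = aᵢ₊₁
  have shift : ∀ i, 1 ≤ i → i + 1 ≤ g - 1 → M * a i = a (i + 1) * M := by
    intro i hi1 hi2
    obtain ⟨i0, rfl⟩ : ∃ i0, i = i0 + 1 := ⟨i - 1, by omega⟩
    have hs1 := List.range'_append (s := 1) (m := i0) (n := 2) (step := 1)
    rw [show 1 + 1 * i0 = i0 + 1 from by omega] at hs1
    have hs2 := List.range'_append (s := 1) (m := i0 + 2) (n := g - 1 - (i0 + 2)) (step := 1)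
    rw [show 1 + 1 * (i0 + 2) = i0 + 3 from by omega,
      show i0 + 2 + (g - 1 - (i0 + 2)) = g - 1 from by omega] at hs2
    have hsplit : List.range' 1 (g - 1)
        = (List.range' 1 i0 ++ List.range' (i0 + 1) 2) ++ List.range' (i0 + 3) (g - 1 - (i0 + 2)) := by
      rw [hs1, hs2]
    set L1 : G := ((List.range' 1 i0).map a).prod with hL1
    set T : G := ((List.range' (i0 + 3) (g - 1 - (i0 + 2))).map a).prod with hT
    have hpair : ((List.range' (i0 + 1) 2).map a).prod = a (i0 + 1) * a (i0 + 1 + 1) := by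
      show (([i0 + 1, i0 + 1 + 1] : List ℕ).map a).prod = _
      simp
    have hMeq : M = (L1 * (a (i0 + 1) * a (i0 + 1 + 1))) * T := by
      rw [hM, hsplit, List.map_append, List.prod_append, List.map_append, List.prod_append, hpair]
    have comm1 : Commute (a (i0 + 1)) T := by
      apply Commute.list_prod_right
      intro x hx
      simp only [List.mem_map, List.mem_range'_1] at hx
      obtain ⟨j, ⟨hj1, hj2⟩, rfl⟩ := hx
      exact hA1 (i0 + 1) j (by omega) (by omega) (by omega)
    have comm2 : Commute (a (i0 + 1 + 1)) L1 := by
      apply Commute.list_prod_right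
      intro x hx
      simp only [List.mem_map, List.mem_range'_1] at hx
      obtain ⟨j, ⟨hj1, hj2⟩, rfl⟩ := hx
      exact (hA1 j (i0 + 1 + 1) (by omega) (by omega) (by omega)).symm
    have hA2' : a (i0 + 1) * a (i0 + 1 + 1) * a (i0 + 1)
        = a (i0 + 1 + 1) * a (i0 + 1) * a (i0 + 1 + 1) := hA2 (i0 + 1) (by omega) (by omega)
    rw [hMeq]
    calc (L1 * (a (i0 + 1) * a (i0 + 1 + 1))) * T * a (i0 + 1)
        = L1 * (a (i0 + 1) * a (i0 + 1 + 1) * a (i0 + 1)) * T := by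
          rw [mul_assoc (L1 * (a (i0 + 1) * a (i0 + 1 + 1))) T (a (i0 + 1)), ← comm1.eq]
          group
      _ = L1 * (a (i0 + 1 + 1) * a (i0 + 1) * a (i0 + 1 + 1)) * T := by rw [hA2']
      _ = a (i0 + 1 + 1) * ((L1 * (a (i0 + 1) * a (i0 + 1 + 1))) * T) := by
          rw [show L1 * (a (i0 + 1 + 1) * a (i0 + 1) * a (i0 + 1 + 1)) * T
              = (L1 * a (i0 + 1 + 1)) * (a (i0 + 1) * a (i0 + 1 + 1) * T) from by group,
            ← comm2.eq]
          group
  -- iterated shift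
  have shiftk : ∀ n i, 1 ≤ i → i + n ≤ g - 1 → M ^ n * a i = a (i + n) * M ^ n := by
    intro n
    induction n with
    | zero => intro i _ _; simp
    | succ m ih =>
      intro i hi1 hi2
      calc M ^ (m + 1) * a i = M ^ m * (M * a i) := by rw [pow_succ, mul_assoc]
        _ = M ^ m * (a (i + 1) * M) := by rw [shift i hi1 (by omega)]
        _ = (M ^ m * a (i + 1)) * M := by rw [mul_assoc]
        _ = a (i + 1 + m) * M ^ m * M := by rw [ih (i + 1) (by omega) (by omega)]
        _ = a (i + (m + 1)) * M ^ (m + 1) := by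
            rw [pow_succ, show i + 1 + m = i + (m + 1) from by omega, mul_assoc]
  -- M u1 M⁻¹ = (a1 a2) u1 (a1 a2)⁻¹
  have hMu : M * u1 * M⁻¹ = (a 1 * a 2) * u1 * (a 1 * a 2)⁻¹ := by
    have hs := List.range'_append (s := 1) (m := 2) (n := g - 3) (step := 1)
    rw [show 1 + 1 * 2 = 3 from by omega, show 2 + (g - 3) = g - 1 from by omega] at hs
    set T2 : G := ((List.range' 3 (g - 3)).map a).prod with hT2
    have hpair2 : ((List.range' 1 2).map a).prod = a 1 * a 2 := by
      show (([1, 2] : List ℕ).map a).prod = _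
      simp
    have hM2 : M = (a 1 * a 2) * T2 := by
      rw [hM, ← hs, List.map_append, List.prod_append, hpair2]
    have commT : Commute u1 T2 := by
      apply Commute.list_prod_right
      intro x hx
      simp only [List.mem_map, List.mem_range'_1] at hx
      obtain ⟨j, ⟨hj1, hj2⟩, rfl⟩ := hx
      exact hC1' j (by omega) (by omega)
    have hT : T2 * u1 * T2⁻¹ = u1 := by rw [← commT.eq, mul_inv_cancel_right]
    rw [hM2]
    calc (a 1 * a 2) * T2 * u1 * ((a 1 * a 2) * T2)⁻¹
        = (a 1 * a 2) * (T2 * u1 * T2⁻¹) * (a 1 * a 2)⁻¹ := by group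
      _ = (a 1 * a 2) * u1 * (a 1 * a 2)⁻¹ := by rw [hT]
  -- the step formula
  have step : ∀ n, n + 2 ≤ g - 1 →
      M ^ (n + 1) * u1 * (M ^ (n + 1))⁻¹
        = (a (n + 1) * a (n + 2)) * (M ^ n * u1 * (M ^ n)⁻¹) * (a (n + 1) * a (n + 2))⁻¹ := by
    intro n hn
    have h1 := shiftk n 1 le_rfl (by omega)
    have h2 := shiftk n 2 (by omega) (by omega)
    calc M ^ (n + 1) * u1 * (M ^ (n + 1))⁻¹
        = M ^ n * (M * u1 * M⁻¹) * (M ^ n)⁻¹ := by rw [pow_succ]; group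
      _ = M ^ n * ((a 1 * a 2) * u1 * (a 1 * a 2)⁻¹) * (M ^ n)⁻¹ := by rw [hMu]
      _ = (M ^ n * a 1) * (a 2 * u1 * (a 2)⁻¹ * (a 1)⁻¹) * (M ^ n)⁻¹ := by group
      _ = a (1 + n) * (M ^ n * a 2) * (u1 * (a 2)⁻¹) * (a 1)⁻¹ * (M ^ n)⁻¹ := by rw [h1]; group
      _ = a (1 + n) * (a (2 + n) * M ^ n) * (u1 * (a 2)⁻¹) * (a 1)⁻¹ * (M ^ n)⁻¹ := by rw [h2]
      _ = a (1 + n) * a (2 + n) * (M ^ n * u1 * (M ^ n)⁻¹)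
            * (M ^ n * a 2 * (M ^ n)⁻¹)⁻¹ * (M ^ n * a 1 * (M ^ n)⁻¹)⁻¹ := by group
      _ = a (1 + n) * a (2 + n) * (M ^ n * u1 * (M ^ n)⁻¹)
            * (a (2 + n) * M ^ n * (M ^ n)⁻¹)⁻¹ * (a (1 + n) * M ^ n * (M ^ n)⁻¹)⁻¹ := by
          rw [h1, h2]
      _ = (a (n + 1) * a (n + 2)) * (M ^ n * u1 * (M ^ n)⁻¹) * (a (n + 1) * a (n + 2))⁻¹ := by
          rw [Nat.add_comm 1 n, Nat.add_comm 2 n]; group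
  -- the conjugator commuting with u1
  have ex : ∀ k, 2 ≤ k → k ≤ g - 2 → ∃ P : G, P * u1 = u1 * P ∧
      M ^ k * u1 * (M ^ k)⁻¹ = P * (M ^ 2 * u1 * (M ^ 2)⁻¹) * P⁻¹ := by
    intro k hk2
    induction k, hk2 using Nat.le_induction with
    | base => intro _; exact ⟨1, by simp, by simp⟩
    | succ m hm ih =>
      intro hm1
      obtain ⟨P, hPu, hPc⟩ := ih (by omega)
      refine ⟨(a (m + 1) * a (m + 2)) * P, ?_, ?_⟩
      · have c1 := hC1' (m + 1) (by omega) (by omega)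
        have c2 := hC1' (m + 2) (by omega) (by omega)
        calc a (m + 1) * a (m + 2) * P * u1 = a (m + 1) * a (m + 2) * (u1 * P) := by
              rw [mul_assoc, hPu]
          _ = a (m + 1) * (u1 * a (m + 2)) * P := by rw [c2]; group
          _ = (u1 * a (m + 1)) * a (m + 2) * P := by rw [c1]; group
          _ = u1 * (a (m + 1) * a (m + 2) * P) := by group
      · rw [step m (by omega), hPc]; group
  intro k hk2 hk
  obtain ⟨P, hPu, hPc⟩ := ex k hk2 hk
  rw [hPc]
  exact conj_comm_iff u1 _ P hPu
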